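/- For n = Δ^r with positive integers Δ ≥ 2, r ≥ 1, the dimension of the poset P(1,2;n) of 1-element and 2-element subsets of [n] ordered by inclusion satisfies log₂ log₂ Δ + log₂ r < dim(P(1,2;n)) ≤ 2⌈log₂ log₂ Δ⌉ + 2⌈log₂ r⌉ + 3. -/

import Mathlib

/-- `L` is a (non-strict) linear order relation on `X`. -/
def IsLinearOrderRel {X : Type*} (L : X → X → Prop) : Prop :=
  (∀ a, L a a) ∧ (∀ a b, L a b → L b a → a = b) ∧
  (∀ a b c, L a b → L b c → L a c) ∧ (∀ a b, L a b ∨ L b a)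

/-- The poset `X` has dimension at most `k`: there are `k` linear extensions of the order
whose intersection is the order. -/
def DimLE (X : Type*) [PartialOrder X] (k : ℕ) : Prop :=
  ∃ L : Fin k → X → X → Prop,
    (∀ i, IsLinearOrderRel (L i)) ∧ ∀ a b : X, a ≤ b ↔ ∀ i, L i a b

/-- The dimension of the poset `X`. -/
noncomputable def posetDim (X : Type*) [PartialOrder X] : ℕ :=
  sInf {k | DimLE X k}

/-- Build a natural number with prescribed low bits. -/
private def mkNum : ℕ → (ℕ → Bool) → ℕ
  | 0, _ => 0
  | (N+1), g => Nat.bit (g 0) (mkNum N (fun i => g (i+1)))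

private lemma mkNum_testBit : ∀ (N : ℕ) (g : ℕ → Bool) (i : ℕ), i < N →
    (mkNum N g).testBit i = g i := by
  intro N
  induction N with
  | zero => intro g i hi; omega
  | succ N ih =>
    intro g i hi
    cases i with
    | zero => simp [mkNum, Nat.testBit_bit_zero]
    | succ i =>
      show (Nat.bit (g 0) (mkNum N (fun i => g (i+1)))).testBit (i+1) = g (i+1)
      rw [Nat.testBit_bit_succ]
      exact ih _ i (by omega)

private lemma exists_diffbit {x y N : ℕ} (hx : x < 2^N) (hy : y < 2^N) (hne : x ≠ y) :
    ∃ t, t < N ∧ x.testBit t ≠ y.testBit t := by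
  by_contra h
  push_neg at h
  apply hne
  apply Nat.eq_of_testBit_eq
  intro i
  by_cases hi : i < N
  · exact h i hi
  · have hx2 : x < 2^i := lt_of_lt_of_le hx (Nat.pow_le_pow_right (by norm_num) (by omega))
    have hy2 : y < 2^i := lt_of_lt_of_le hy (Nat.pow_le_pow_right (by norm_num) (by omega))
    rw [Nat.testBit_lt_two_pow hx2, Nat.testBit_lt_two_pow hy2]

private lemma exists_maxdiff {x y N : ℕ} (hx : x < 2^N) (hy : y < 2^N) (hne : x ≠ y) :
    ∃ p, p < N ∧ x.testBit p ≠ y.testBit p ∧ ∀ i, p < i → x.testBit i = y.testBit i := by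
  classical
  set D := (Finset.range N).filter (fun i => x.testBit i ≠ y.testBit i) with hD
  have hDne : D.Nonempty := by
    obtain ⟨t, htN, hdt⟩ := exists_diffbit hx hy hne
    exact ⟨t, by simp [hD, htN, hdt]⟩
  have hmem := D.max'_mem hDne
  simp only [hD, Finset.mem_filter, Finset.mem_range] at hmem
  refine ⟨D.max' hDne, hmem.1, hmem.2, ?_⟩
  intro i hi
  by_cases hiN : i < N
  · by_contra hne2
    have hiD : i ∈ D := by simp [hD, hiN, hne2]
    have := D.le_max' i hiD
    omega
  · have hx2 : x < 2^i := lt_of_lt_of_le hx (Nat.pow_le_pow_right (by norm_num) (by omega))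
    have hy2 : y < 2^i := lt_of_lt_of_le hy (Nat.pow_le_pow_right (by norm_num) (by omega))
    rw [Nat.testBit_lt_two_pow hx2, Nat.testBit_lt_two_pow hy2]

/-- The mask: bit at `pos` is `!(ν ⊕ bit_j(pos))`. -/
private def maskNum (L j : ℕ) (ν : Bool) : ℕ := mkNum L (fun pos => !(xor ν (pos.testBit j)))

private def keyF (L j : ℕ) (ν : Bool) {n : ℕ} (a : Fin n) : ℕ := a.val ^^^ maskNum L j ν

private lemma keyF_inj {n L j : ℕ} {ν : Bool} : Function.Injective (keyF L j ν (n := n)) := by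
  intro a b h
  have h2 : a.val ^^^ maskNum L j ν ^^^ maskNum L j ν = b.val ^^^ maskNum L j ν ^^^ maskNum L j ν := by
    rw [show a.val ^^^ maskNum L j ν = keyF L j ν a from rfl, h]; rfl
  rw [Nat.xor_xor_cancel_right, Nat.xor_xor_cancel_right] at h2
  exact Fin.ext h2

private lemma key_lt {n L : ℕ} (j : ℕ) (ν : Bool) (x z : Fin n)
    (p : ℕ) (hp : p < L) (hd : x.val.testBit p ≠ z.val.testBit p)
    (hmax : ∀ i, p < i → x.val.testBit i = z.val.testBit i)
    (hwin : z.val.testBit p = xor ν (p.testBit j)) :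
    keyF L j ν x < keyF L j ν z := by
  have hmb : (maskNum L j ν).testBit p = !(xor ν (p.testBit j)) := mkNum_testBit L _ p hp
  have hxbit : x.val.testBit p = !(z.val.testBit p) := by
    cases h1 : x.val.testBit p <;> cases h2 : z.val.testBit p <;> simp_all
  apply Nat.lt_of_testBit p
  · rw [keyF, Nat.testBit_xor, hmb, hxbit, hwin]
    cases ν <;> cases p.testBit j <;> rfl
  · rw [keyF, Nat.testBit_xor, hmb, hwin]
    cases ν <;> cases p.testBit j <;> rfl
  · intro i hi
    rw [keyF, keyF, Nat.testBit_xor, Nat.testBit_xor, hmax i hi]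

/-- Core suitability: some key puts `c` above both `u` and `v`. -/
private lemma exists_beat {n L B : ℕ} (hnL : n ≤ 2^L) (hLB : L ≤ 2^B)
    (c u v : Fin n) (hcu : c ≠ u) (hcv : c ≠ v) :
    ∃ (j : ℕ) (ν : Bool), j ≤ B ∧ keyF L j ν u < keyF L j ν c ∧ keyF L j ν v < keyF L j ν c := by
  have hc : c.val < 2^L := lt_of_lt_of_le c.isLt hnL
  have hu : u.val < 2^L := lt_of_lt_of_le u.isLt hnL
  have hv : v.val < 2^L := lt_of_lt_of_le v.isLt hnL
  obtain ⟨p, hpL, hdp, hmp⟩ := exists_maxdiff hu hc (fun h => hcu (Fin.ext h).symm)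
  obtain ⟨q, hqL, hdq, hmq⟩ := exists_maxdiff hv hc (fun h => hcv (Fin.ext h).symm)
  by_cases hsame : c.val.testBit p = c.val.testBit q
  · refine ⟨B, c.val.testBit p, le_refl B, ?_, ?_⟩
    · apply key_lt B _ u c p hpL hdp hmp
      rw [Nat.testBit_lt_two_pow (lt_of_lt_of_le hpL hLB)]
      cases c.val.testBit p <;> rfl
    · apply key_lt B _ v c q hqL hdq hmq
      rw [Nat.testBit_lt_two_pow (lt_of_lt_of_le hqL hLB), ← hsame]
      cases c.val.testBit p <;> rfl
  · have hpq : p ≠ q := fun h => hsame (by rw [h])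
    obtain ⟨t, htB, hdt⟩ := exists_diffbit (lt_of_lt_of_le hpL hLB) (lt_of_lt_of_le hqL hLB) hpq
    refine ⟨t, xor (c.val.testBit p) (p.testBit t), le_of_lt htB, ?_, ?_⟩
    · apply key_lt t _ u c p hpL hdp hmp
      cases c.val.testBit p <;> cases p.testBit t <;> rfl
    · apply key_lt t _ v c q hqL hdq hmq
      have h1 : c.val.testBit q = !(c.val.testBit p) := by
        cases h1 : c.val.testBit p <;> cases h2 : c.val.testBit q <;> simp_all
      have h2 : q.testBit t = !(p.testBit t) := by
        cases h1 : p.testBit t <;> cases h2 : q.testBit t <;> simp_all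
      rw [h1, h2]
      cases c.val.testBit p <;> cases p.testBit t <;> rfl

-- ***** real content begins *****

private lemma P12_nonempty {n : ℕ} (s : {s : Finset (Fin n) // s.card = 1 ∨ s.card = 2}) :
    s.val.Nonempty :=
  Finset.card_pos.mp (by rcases s.2 with h | h <;> omega)

private lemma P12_card_le {n : ℕ} (s : {s : Finset (Fin n) // s.card = 1 ∨ s.card = 2}) :
    s.val.card ≤ 2 := by rcases s.2 with h | h <;> omega

/-- max key over the set -/
private def KM {n : ℕ} (κ : Fin n → ℕ) (s : {s : Finset (Fin n) // s.card = 1 ∨ s.card = 2}) : ℕ :=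
  (s.val.image κ).max' ((P12_nonempty s).image κ)

/-- min key over the set -/
private def Km {n : ℕ} (κ : Fin n → ℕ) (s : {s : Finset (Fin n) // s.card = 1 ∨ s.card = 2}) : ℕ :=
  (s.val.image κ).min' ((P12_nonempty s).image κ)

/-- the linear order relation induced by the key `κ` -/
private def KRel {n : ℕ} (κ : Fin n → ℕ) (s t : {s : Finset (Fin n) // s.card = 1 ∨ s.card = 2}) :
    Prop :=
  KM κ s < KM κ t ∨ (KM κ s = KM κ t ∧ Km κ t ≤ Km κ s)

private lemma small_eq (s : Finset ℕ) (h : s.Nonempty) (hc : s.card ≤ 2) :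
    s = {s.min' h, s.max' h} := by
  apply Finset.Subset.antisymm
  · intro x hx
    by_contra hxx
    rw [Finset.mem_insert, Finset.mem_singleton] at hxx
    push_neg at hxx
    have h1 : s.min' h < x := lt_of_le_of_ne (s.min'_le x hx) (Ne.symm hxx.1)
    have h2 : x < s.max' h := lt_of_le_of_ne (s.le_max' x hx) hxx.2
    have hsub : ({s.min' h, x, s.max' h} : Finset ℕ) ⊆ s := by
      intro y hy
      simp only [Finset.mem_insert, Finset.mem_singleton] at hy
      rcases hy with rfl | rfl | rfl
      · exact s.min'_mem h
      · exact hx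
      · exact s.max'_mem h
    have hcard : ({s.min' h, x, s.max' h} : Finset ℕ).card = 3 := by
      rw [Finset.card_insert_of_notMem (by simp; omega),
        Finset.card_insert_of_notMem (by simp; omega), Finset.card_singleton]
    have := Finset.card_le_card hsub
    omega
  · intro x hx
    rw [Finset.mem_insert, Finset.mem_singleton] at hx
    rcases hx with rfl | rfl
    · exact s.min'_mem h
    · exact s.max'_mem h

private lemma KRel_eq {n : ℕ} (κ : Fin n → ℕ) (hκ : Function.Injective κ)
    (s t : {s : Finset (Fin n) // s.card = 1 ∨ s.card = 2})
    (h1 : KM κ s = KM κ t) (h2 : Km κ s = Km κ t) : s = t := by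
  have hs := small_eq (s.val.image κ) ((P12_nonempty s).image κ)
    (le_trans (Finset.card_image_le) (P12_card_le s))
  have ht := small_eq (t.val.image κ) ((P12_nonempty t).image κ)
    (le_trans (Finset.card_image_le) (P12_card_le t))
  have him : s.val.image κ = t.val.image κ := by
    rw [hs, ht]
    show ({Km κ s, KM κ s} : Finset ℕ) = {Km κ t, KM κ t}
    rw [h1, h2]
  have := Finset.image_injective hκ him
  exact Subtype.ext this

private lemma KRel_isLinear {n : ℕ} (κ : Fin n → ℕ) (hκ : Function.Injective κ) :
    IsLinearOrderRel (KRel κ) := by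
  refine ⟨fun a => Or.inr ⟨rfl, le_refl _⟩, ?_, ?_, ?_⟩
  · intro a b hab hba
    rcases hab with h | ⟨h1, h2⟩ <;> rcases hba with h' | ⟨h1', h2'⟩ <;> try omega
    exact KRel_eq κ hκ a b h1 (le_antisymm h2' h2)
  · intro a b c hab hbc
    rcases hab with h | ⟨h1, h2⟩ <;> rcases hbc with h' | ⟨h1', h2'⟩
    · exact Or.inl (lt_trans h h')
    · exact Or.inl (h1' ▸ h)
    · exact Or.inl (h1 ▸ h')
    · exact Or.inr ⟨h1.trans h1', le_trans h2' h2⟩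
  · intro a b
    rcases lt_trichotomy (KM κ a) (KM κ b) with h | h | h
    · exact Or.inl (Or.inl h)
    · rcases le_total (Km κ b) (Km κ a) with h2 | h2
      · exact Or.inl (Or.inr ⟨h, h2⟩)
      · exact Or.inr (Or.inr ⟨h.symm, h2⟩)
    · exact Or.inr (Or.inl h)

private lemma KRel_of_le {n : ℕ} (κ : Fin n → ℕ)
    (s t : {s : Finset (Fin n) // s.card = 1 ∨ s.card = 2}) (h : s ≤ t) : KRel κ s t := by
  have hsub : s.val ⊆ t.val := h
  have himg : s.val.image κ ⊆ t.val.image κ := Finset.image_subset_image hsub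
  have hM : KM κ s ≤ KM κ t := Finset.max'_subset _ himg
  rcases eq_or_lt_of_le hM with h1 | h1
  · exact Or.inr ⟨h1, Finset.min'_subset _ himg⟩
  · exact Or.inl h1

private lemma not_KRel {n : ℕ} (κ : Fin n → ℕ)
    (s t : {s : Finset (Fin n) // s.card = 1 ∨ s.card = 2})
    (c : Fin n) (hc : c ∈ s.val) (hbeat : ∀ u ∈ t.val, κ u < κ c) : ¬ KRel κ s t := by
  have hM : KM κ t < KM κ s := by
    have h1 : KM κ t < κ c := by
      rw [KM, Finset.max'_lt_iff]
      intro y hy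
      rw [Finset.mem_image] at hy
      obtain ⟨u, hu, rfl⟩ := hy
      exact hbeat u hu
    exact lt_of_lt_of_le h1 (Finset.le_max' _ _ (Finset.mem_image_of_mem κ hc))
  intro h
  rcases h with h | ⟨h1, _⟩ <;> omega

/-- The main upper bound construction. -/
theorem dimLE_P12 (n L B K : ℕ) (hnL : n ≤ 2^L) (hLB : L ≤ 2^B) (hK : 2*B + 2 ≤ K) :
    DimLE {s : Finset (Fin n) // s.card = 1 ∨ s.card = 2} K := by
  refine ⟨fun i => KRel (keyF L (i.val/2) (i.val % 2 == 1)), fun i => KRel_isLinear _ keyF_inj, ?_⟩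
  intro a b
  constructor
  · intro h i
    exact KRel_of_le _ a b h
  · intro h
    by_contra hab
    have hsub : ¬ (a.val ⊆ b.val) := hab
    obtain ⟨c, hca, hcb⟩ := Finset.not_subset.mp hsub
    -- get u v with b.val = {u, v} (possibly u = v)
    obtain ⟨u, v, huv⟩ : ∃ u v : Fin n, b.val = {u, v} := by
      rcases b.2 with h1 | h1
      · obtain ⟨u, hu⟩ := Finset.card_eq_one.mp h1
        exact ⟨u, u, by rw [hu]; simp⟩
      · obtain ⟨u, v, _, huv⟩ := Finset.card_eq_two.mp h1
        exact ⟨u, v, huv⟩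
    have hcu : c ≠ u := by rintro rfl; exact hcb (by rw [huv]; simp)
    have hcv : c ≠ v := by rintro rfl; exact hcb (by rw [huv]; simp)
    obtain ⟨j, ν, hjB, hbu, hbv⟩ := exists_beat hnL hLB c u v hcu hcv
    have hidx : 2*j + ν.toNat < K := by
      have : ν.toNat ≤ 1 := Bool.toNat_le ν
      omega
    have hji : (2*j + ν.toNat) / 2 = j := by
      have : ν.toNat ≤ 1 := Bool.toNat_le ν
      omega
    have hνi : ((2*j + ν.toNat) % 2 == 1) = ν := by
      cases ν <;> simp [Nat.mul_add_mod]
    have hR := h ⟨2*j + ν.toNat, hidx⟩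
    simp only [Fin.val_mk, hji, hνi] at hR
    refine not_KRel (keyF L j ν) a b c hca ?_ hR
    intro w hw
    rw [huv, Finset.mem_insert, Finset.mem_singleton] at hw
    rcases hw with rfl | rfl
    · exact hbu
    · exact hbv

theorem P12_lower (n k : ℕ) (h : DimLE {s : Finset (Fin n) // s.card = 1 ∨ s.card = 2} k) :
    n ≤ 2^(2^k - 1) := by
  classical
  obtain ⟨Lo, hlin, hiff⟩ := h
  let sing : Fin n → {s : Finset (Fin n) // s.card = 1 ∨ s.card = 2} := fun a => ⟨{a}, Or.inl (Finset.card_singleton a)⟩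
  have hext : ∀ (i : Fin k) {s t : {s : Finset (Fin n) // s.card = 1 ∨ s.card = 2}}, s ≤ t → Lo i s t := fun i {s t} hst => (hiff s t).mp hst i
  have hflip : ∀ {s t : {s : Finset (Fin n) // s.card = 1 ∨ s.card = 2}}, ¬ (s ≤ t) → ∃ i, Lo i t s := by
    intro s t hst
    rw [hiff] at hst
    push_neg at hst
    obtain ⟨i, hi⟩ := hst
    rcases (hlin i).2.2.2 s t with h' | h'
    · exact absurd h' hi
    · exact ⟨i, h'⟩
  have h_not_le_sing : ∀ {a b : Fin n}, a ≠ b → ¬ (sing a ≤ sing b) := by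
    intro a b hab hle
    have : ({a} : Finset (Fin n)) ⊆ {b} := hle
    simp only [Finset.singleton_subset_iff, Finset.mem_singleton] at this
    exact hab this
  -- the sets S(b,a) = indices where {b} is below {a}
  let sset : Fin n → Fin n → Finset (Fin k) :=
    fun b a => Finset.univ.filter (fun i => Lo i (sing b) (sing a))
  have claim1 : ∀ {a b : Fin n}, a ≠ b → (sset b a).Nonempty := by
    intro a b hab
    obtain ⟨i, hi⟩ := hflip (h_not_le_sing hab)
    exact ⟨i, by simp [sset, hi]⟩
  have claim2 : ∀ (a b x : Fin n), a ≠ b → x ≠ b →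
      ∃ i, Lo i (sing x) (sing b) ∧ Lo i (sing a) (sing b) := by
    intro a b x hab hxb
    by_cases hxa : x = a
    · subst hxa
      obtain ⟨i, hi⟩ := hflip (h_not_le_sing (Ne.symm hab))
      exact ⟨i, hi, hi⟩
    · set p : {s : Finset (Fin n) // s.card = 1 ∨ s.card = 2} := ⟨{x, a}, Or.inr (Finset.card_pair hxa)⟩ with hp
      have hble : ¬ (sing b ≤ p) := by
        intro hle
        have : ({b} : Finset (Fin n)) ⊆ {x, a} := hle
        simp only [Finset.singleton_subset_iff, Finset.mem_insert, Finset.mem_singleton] at this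
        rcases this with rfl | rfl
        · exact hxb rfl
        · exact hab rfl
      obtain ⟨i, hi⟩ := hflip hble
      have hx : Lo i (sing x) p := hext i (by
        show ({x} : Finset (Fin n)) ⊆ {x, a}
        simp)
      have ha : Lo i (sing a) p := hext i (by
        show ({a} : Finset (Fin n)) ⊆ {x, a}
        simp)
      exact ⟨i, (hlin i).2.2.1 _ _ _ hx hi, (hlin i).2.2.1 _ _ _ ha hi⟩
  let F : Fin n → Finset (Finset (Fin k)) :=
    fun a => (Finset.univ.erase a).image (fun b => sset b a)
  have hFne : ∀ (a : Fin n), ∀ S ∈ F a, S ≠ ∅ := by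
    intro a S hS
    simp only [F, Finset.mem_image, Finset.mem_erase] at hS
    obtain ⟨b, ⟨hba, -⟩, rfl⟩ := hS
    exact (claim1 (Ne.symm hba)).ne_empty
  have hFinj : Function.Injective F := by
    intro a b hFab
    by_contra hab
    have h1 : sset b a ∈ F a := by
      apply Finset.mem_image_of_mem
      simp [Ne.symm hab]
    rw [hFab] at h1
    simp only [F, Finset.mem_image, Finset.mem_erase] at h1
    obtain ⟨x, ⟨hxb, -⟩, hxe⟩ := h1
    obtain ⟨i, hix, hia⟩ := claim2 a b x hab hxb
    have hmem : i ∈ sset x b := by simp [sset, hix]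
    rw [hxe] at hmem
    have hba : Lo i (sing b) (sing a) := by
      simp only [sset, Finset.mem_filter] at hmem
      exact hmem.2
    have := (hlin i).2.1 _ _ hia hba
    have : ({a} : Finset (Fin n)) = {b} := Subtype.ext_iff.mp this
    exact hab (Finset.singleton_injective this)
  -- counting
  let ψ : Fin n → Finset {S : Finset (Fin k) // S ≠ ∅} :=
    fun a => (F a).subtype (fun S => S ≠ ∅)
  have hψinj : Function.Injective ψ := by
    intro a b hab
    apply hFinj
    have ha : ((F a).subtype (fun S => S ≠ ∅)).map (Function.Embedding.subtype _) = F a := by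
      rw [Finset.subtype_map]
      exact Finset.filter_true_of_mem (hFne a)
    have hb : ((F b).subtype (fun S => S ≠ ∅)).map (Function.Embedding.subtype _) = F b := by
      rw [Finset.subtype_map]
      exact Finset.filter_true_of_mem (hFne b)
    rw [← ha, ← hb]
    exact congrArg _ hab
  have hcard := Fintype.card_le_of_injective ψ hψinj
  rw [Fintype.card_fin, Fintype.card_finset] at hcard
  have hsub : Fintype.card {S : Finset (Fin k) // S ≠ ∅} = 2^k - 1 := by
    have h1 : Fintype.card {S : Finset (Fin k) // ¬ (S = ∅)} =
        Fintype.card (Finset (Fin k)) - Fintype.card {S : Finset (Fin k) // S = ∅} :=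
      Fintype.card_subtype_compl _
    rw [Fintype.card_finset, Fintype.card_fin, Fintype.card_subtype_eq] at h1
    exact h1
  rw [hsub] at hcard
  exact hcard

/-- For `n = Δ^r` (`Δ ≥ 2`, `r ≥ 1`), the dimension of the poset
`P(1,2;n)` of 1- and 2-element subsets of `[n]` ordered by inclusion satisfies
`log₂ log₂ Δ + log₂ r < dim(P(1,2;n)) ≤ 2⌈log₂ log₂ Δ⌉ + 2⌈log₂ r⌉ + 3`. -/
theorem P12_dim_bounds (Δ r : ℕ) (hΔ : 2 ≤ Δ) (hr : 1 ≤ r)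
    (n : ℕ) (hn : n = Δ ^ r) :
    Real.logb 2 (Real.logb 2 (Δ : ℝ)) + Real.logb 2 (r : ℝ)
        < (posetDim {s : Finset (Fin n) // s.card = 1 ∨ s.card = 2} : ℝ) ∧
    posetDim {s : Finset (Fin n) // s.card = 1 ∨ s.card = 2}
        ≤ 2 * Nat.clog 2 (Nat.clog 2 Δ) + 2 * Nat.clog 2 r + 3 := by
  have one_lt_two : (1:ℕ) < 2 := by norm_num
  set c := Nat.clog 2 Δ with hc
  set L := r * c with hL
  set B := Nat.clog 2 L with hB
  set K := 2 * Nat.clog 2 c + 2 * Nat.clog 2 r + 3 with hK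
  have hnL : n ≤ 2^L := by
    rw [hn]
    calc Δ^r ≤ (2^c)^r := Nat.pow_le_pow_left (Nat.le_pow_clog one_lt_two Δ) r
    _ = 2^L := by rw [← pow_mul, mul_comm]
  have hLB : L ≤ 2^B := Nat.le_pow_clog one_lt_two L
  have hBle : B ≤ Nat.clog 2 r + Nat.clog 2 c := by
    rw [hB, Nat.clog_le_iff_le_pow one_lt_two]
    calc L = r * c := hL
    _ ≤ 2^(Nat.clog 2 r) * 2^(Nat.clog 2 c) :=
        Nat.mul_le_mul (Nat.le_pow_clog one_lt_two r) (Nat.le_pow_clog one_lt_two c)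
    _ = 2^(Nat.clog 2 r + Nat.clog 2 c) := (pow_add 2 _ _).symm
  have hKB : 2*B + 2 ≤ K := by omega
  have hDim : DimLE {s : Finset (Fin n) // s.card = 1 ∨ s.card = 2} K :=
    dimLE_P12 n L B K hnL hLB hKB
  have hmem : DimLE {s : Finset (Fin n) // s.card = 1 ∨ s.card = 2}
      (posetDim {s : Finset (Fin n) // s.card = 1 ∨ s.card = 2}) := by
    have h2 : sInf {k : ℕ | DimLE {s : Finset (Fin n) // s.card = 1 ∨ s.card = 2} k} ∈
        {k : ℕ | DimLE {s : Finset (Fin n) // s.card = 1 ∨ s.card = 2} k} :=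
      Nat.sInf_mem ⟨K, hDim⟩
    exact h2
  constructor
  · set k := posetDim {s : Finset (Fin n) // s.card = 1 ∨ s.card = 2} with hk
    have hb := P12_lower n k hmem
    -- real arithmetic
    have hΔ0 : (0:ℝ) < (Δ:ℝ) := by positivity
    have hΔ1 : (1:ℝ) ≤ Real.logb 2 (Δ:ℝ) := by
      have h3 : Real.logb 2 (2:ℝ) ≤ Real.logb 2 (Δ:ℝ) := by
        apply (Real.logb_le_logb (by norm_num) (by norm_num) hΔ0).mpr
        exact_mod_cast hΔ
      simpa using h3
    have hr1 : (1:ℝ) ≤ (r:ℝ) := by exact_mod_cast hr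
    have hn0 : (0:ℝ) < (n:ℝ) := by rw [hn]; positivity
    have hlogn : Real.logb 2 (n:ℝ) = (r:ℝ) * Real.logb 2 (Δ:ℝ) := by
      rw [hn]; push_cast; exact Real.logb_pow 2 (Δ:ℝ) r
    have h2 : Real.logb 2 (n:ℝ) ≤ ((2^k - 1 : ℕ):ℝ) := by
      calc Real.logb 2 (n:ℝ) ≤ Real.logb 2 (((2^(2^k - 1) : ℕ) : ℝ)) := by
            apply (Real.logb_le_logb (by norm_num) hn0 (by positivity)).mpr
            exact_mod_cast hb
      _ = ((2^k - 1 : ℕ):ℝ) := by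
            have : (((2:ℕ)^(2^k - 1) : ℕ) : ℝ) = (2:ℝ)^(2^k - 1 : ℕ) := by push_cast; ring
            rw [this, Real.logb_pow]
            simp
    have hlt : (r:ℝ) * Real.logb 2 (Δ:ℝ) < (2:ℝ)^k := by
      rw [← hlogn]
      calc Real.logb 2 (n:ℝ) ≤ ((2^k - 1 : ℕ):ℝ) := h2
      _ < ((2^k : ℕ):ℝ) := by
            have h4 : (2:ℕ)^k - 1 < 2^k := by
              have : 1 ≤ (2:ℕ)^k := Nat.one_le_two_pow
              omega
            exact_mod_cast h4
      _ = (2:ℝ)^k := by push_cast; ring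
    have hmul : Real.logb 2 (Real.logb 2 (Δ:ℝ) * (r:ℝ)) =
        Real.logb 2 (Real.logb 2 (Δ:ℝ)) + Real.logb 2 (r:ℝ) :=
      Real.logb_mul (by linarith) (by linarith)
    rw [← hmul]
    calc Real.logb 2 (Real.logb 2 (Δ:ℝ) * (r:ℝ)) < Real.logb 2 ((2:ℝ)^k) := by
          apply Real.logb_lt_logb (by norm_num) (by nlinarith)
          nlinarith
    _ = (k:ℝ) := by
          rw [Real.logb_pow]
          simp
  · exact Nat.sInf_le hDim
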